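/- Let (Ω, ℱ, P) be a probability space, d a positive natural number, 𝒜 a finite nonempty set of vectors in ℝᵈ, and π : 𝒜 → ℝ a probability vector (π(a) ≥ 0, Σₐ π(a) = 1) whose Gram matrix Q(π) = Σₐ π(a)·a aᵀ is invertible and satisfies aᵀ Q(π)⁻¹ a ≤ d for all a ∈ 𝒜. Let Δ > 0, δ ∈ (0, 1), χ ∈ ℝ, θ⋆ ∈ ℝᵈ. For each a ∈ 𝒜 set T(a) = ⌈(d·π(a)/(2Δ²))·log(|𝒜|/δ)⌉ if π(a) > 0 and T(a) = 0 otherwise, and suppose T(a) independent observations ζ_{a,s} = χ·⟨θ⋆, a⟩ + η_{a,s} (s = 1,…,T(a)) are made, where the noise variables η_{a,s} are jointly independent and each satisfies E[exp(λ·η_{a,s})] ≤ exp(λ²/8) for all λ ∈ ℝ. Let V = Σₐ T(a)·a aᵀ, assume V is invertible, and let θ̂ = V⁻¹ (Σₐ Σ_{s=1}^{T(a)} ζ_{a,s}·a) be the least-squares estimator. Then with probability at least 1 − 2δ, for every a ∈ 𝒜, |⟨θ̂, a⟩ − χ·⟨θ⋆, a⟩| ≤ Δ. -/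

import Mathlib

open Matrix MeasureTheory ProbabilityTheory

lemma vmv_mulVec {d : ℕ} (a u : Fin d → ℝ) : vecMulVec a a *ᵥ u = (a ⬝ᵥ u) • a := by
  ext i
  simp only [Matrix.mulVec, Matrix.vecMulVec_apply, dotProduct, Pi.smul_apply, smul_eq_mul,
    Finset.sum_mul, Finset.mul_sum]
  exact Finset.sum_congr rfl fun j _ => by ring

lemma msum_mulVec {d : ℕ} {β : Type*} (s : Finset β) (M : β → Matrix (Fin d) (Fin d) ℝ)
    (u : Fin d → ℝ) : (∑ b ∈ s, M b) *ᵥ u = ∑ b ∈ s, M b *ᵥ u :=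
  map_sum (Matrix.mulVec.addMonoidHomLeft u) M s

lemma dp_sum {d : ℕ} {β : Type*} (s : Finset β) (f : β → (Fin d → ℝ)) (x : Fin d → ℝ) :
    x ⬝ᵥ ∑ b ∈ s, f b = ∑ b ∈ s, x ⬝ᵥ f b := by
  simp only [dotProduct, Finset.sum_apply, Finset.mul_sum]
  exact Finset.sum_comm

lemma bilin_sum {d : ℕ} (s : Finset (Fin d → ℝ)) (c : (Fin d → ℝ) → ℝ) (x u : Fin d → ℝ) :
    x ⬝ᵥ ((∑ b ∈ s, c b • vecMulVec b b) *ᵥ u) = ∑ b ∈ s, c b * (x ⬝ᵥ b) * (b ⬝ᵥ u) := by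
  rw [msum_mulVec, dp_sum]
  refine Finset.sum_congr rfl fun b _ => ?_
  rw [Matrix.smul_mulVec, vmv_mulVec, dotProduct_smul, dotProduct_smul]
  simp only [smul_eq_mul]; ring

lemma cs_psd {d : ℕ} {A : Matrix (Fin d) (Fin d) ℝ} (hA : A.PosSemidef) (u v : Fin d → ℝ) :
    (u ⬝ᵥ (A *ᵥ v)) ^ 2 ≤ (u ⬝ᵥ (A *ᵥ u)) * (v ⬝ᵥ (A *ᵥ v)) := by
  obtain ⟨B, rfl⟩ : ∃ B : Matrix (Fin d) (Fin d) ℝ, A = Bᴴ * B := by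
    open scoped MatrixOrder in
    refine ⟨CFC.sqrt A, ?_⟩
    open scoped MatrixOrder in
    rw [← star_eq_conjTranspose, (CFC.sqrt_nonneg A).isSelfAdjoint.star_eq,
      CFC.sqrt_mul_sqrt_self A hA.nonneg]
  have key : ∀ x y : Fin d → ℝ, x ⬝ᵥ ((Bᴴ * B) *ᵥ y) = (B *ᵥ x) ⬝ᵥ (B *ᵥ y) := by
    intro x y
    rw [← Matrix.mulVec_mulVec, Matrix.dotProduct_mulVec,
      Matrix.conjTranspose_eq_transpose_of_trivial, Matrix.vecMul_transpose]
  rw [key, key, key]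
  have := Finset.sum_mul_sq_le_sq_mul_sq Finset.univ (B *ᵥ u) (B *ᵥ v)
  simpa [dotProduct, pow_two] using this

lemma inv_quad_comp {d : ℕ} (A B : Matrix (Fin d) (Fin d) ℝ)
    (hApsd : A.PosSemidef) (hAinv : IsUnit A) (hBinv : IsUnit B)
    (hle : ∀ u, u ⬝ᵥ (A *ᵥ u) ≤ u ⬝ᵥ (B *ᵥ u)) (x : Fin d → ℝ) :
    x ⬝ᵥ (B⁻¹ *ᵥ x) ≤ x ⬝ᵥ (A⁻¹ *ᵥ x) := by
  have hAdet : IsUnit A.det := (Matrix.isUnit_iff_isUnit_det A).mp hAinv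
  have hBdet : IsUnit B.det := (Matrix.isUnit_iff_isUnit_det B).mp hBinv
  set u := B⁻¹ *ᵥ x with hu
  set v := A⁻¹ *ᵥ x with hv
  have hBu : B *ᵥ u = x := by
    rw [hu, Matrix.mulVec_mulVec, Matrix.mul_nonsing_inv _ hBdet, Matrix.one_mulVec]
  have hAv : A *ᵥ v = x := by
    rw [hv, Matrix.mulVec_mulVec, Matrix.mul_nonsing_inv _ hAdet, Matrix.one_mulVec]
  have hβ : x ⬝ᵥ (B⁻¹ *ᵥ x) = u ⬝ᵥ (B *ᵥ u) := by
    rw [← hu, hBu, dotProduct_comm]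
  have hα : x ⬝ᵥ (A⁻¹ *ᵥ x) = v ⬝ᵥ (A *ᵥ v) := by
    rw [← hv, hAv, dotProduct_comm]
  have hRHSnn : 0 ≤ v ⬝ᵥ (A *ᵥ v) := by
    have := hApsd.dotProduct_mulVec_nonneg v; rwa [star_trivial] at this
  have hcs := cs_psd hApsd u v
  have huAu : u ⬝ᵥ (A *ᵥ u) ≤ u ⬝ᵥ (B *ᵥ u) := hle u
  set β := u ⬝ᵥ (B *ᵥ u) with hβdef
  have hmid : u ⬝ᵥ (A *ᵥ v) = β := by rw [hAv, ← hBu]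
  rw [hmid] at hcs
  rw [hβ, hα]
  rcases le_or_gt β 0 with h0 | h0
  · exact h0.trans hRHSnn
  · have h1 : β ^ 2 ≤ β * (v ⬝ᵥ (A *ᵥ v)) :=
      hcs.trans (mul_le_mul_of_nonneg_right huAu hRHSnn)
    have h1' : β * β ≤ β * (v ⬝ᵥ (A *ᵥ v)) := by rw [← pow_two]; exact h1
    exact (mul_le_mul_iff_of_pos_left h0).mp h1'

lemma chernoff_one {Ω : Type*} [MeasurableSpace Ω] (P : Measure Ω) [IsProbabilityMeasure P]
    {ι : Type*} [Fintype ι] (η : ι → Ω → ℝ) (hmeas : ∀ i, Measurable (η i))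
    (hindep : iIndepFun η P)
    (hint : ∀ i (l : ℝ), Integrable (fun ω => Real.exp (l * η i ω)) P)
    (hsub : ∀ i (l : ℝ), ∫ ω, Real.exp (l * η i ω) ∂P ≤ Real.exp (l ^ 2 / 8))
    (c : ι → ℝ) {t : ℝ} (ht : 0 ≤ t) (hσ : 0 < ∑ i, c i ^ 2) :
    P {ω | t ≤ ∑ i, c i * η i ω} ≤ ENNReal.ofReal (Real.exp (-2 * t ^ 2 / ∑ i, c i ^ 2)) := by
  classical
  set σ2 := ∑ i, c i ^ 2 with hσ2
  set lam := 4 * t / σ2 with hlam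
  have hσ2ne : σ2 ≠ 0 := ne_of_gt hσ
  have hlam0 : 0 ≤ lam := div_nonneg (by linarith) hσ.le
  set X : ι → Ω → ℝ := fun i ω => c i * η i ω with hX
  have hXmeas : ∀ i, Measurable (X i) := fun i => (hmeas i).const_mul (c i)
  have hXindep : iIndepFun X P :=
    hindep.comp (fun i x => c i * x) (fun i => measurable_const_mul _)
  have hXint : ∀ i, Integrable (fun ω => Real.exp (lam * X i ω)) P := by
    intro i
    have := hint i (lam * c i)
    simpa [hX, mul_assoc] using this
  have hintsum : Integrable (fun ω => Real.exp (lam * (∑ i, X i) ω)) P :=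
    hXindep.integrable_exp_mul_sum hXmeas (fun i _ => hXint i)
  have hch := measure_ge_le_exp_mul_mgf (X := ∑ i, X i) (μ := P) (t := lam) t hlam0 hintsum
  have hmgf : mgf (∑ i, X i) P lam ≤ Real.exp (lam ^ 2 * σ2 / 8) := by
    rw [hXindep.mgf_sum hXmeas]
    have each : ∀ i ∈ Finset.univ (α := ι), mgf (X i) P lam ≤ Real.exp ((lam * c i) ^ 2 / 8) := by
      intro i _
      have h2 := hsub i (lam * c i)
      have heq : mgf (X i) P lam = ∫ ω, Real.exp ((lam * c i) * η i ω) ∂P := by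
        unfold mgf
        congr 1
        ext ω
        rw [hX]
        ring_nf
      rw [heq]
      exact h2
    calc ∏ i, mgf (X i) P lam ≤ ∏ i, Real.exp ((lam * c i) ^ 2 / 8) :=
          Finset.prod_le_prod (fun i _ => mgf_nonneg) each
      _ = Real.exp (∑ i, (lam * c i) ^ 2 / 8) := by rw [Real.exp_sum]
      _ = Real.exp (lam ^ 2 * σ2 / 8) := by
          congr 1
          rw [← Finset.sum_div]
          congr 1
          rw [hσ2, Finset.mul_sum]
          exact Finset.sum_congr rfl fun i _ => by ring
  have hfinal : (P {ω | t ≤ (∑ i, X i) ω}).toReal ≤ Real.exp (-2 * t ^ 2 / σ2) := by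
    refine hch.trans ?_
    calc Real.exp (-lam * t) * mgf (∑ i, X i) P lam
        ≤ Real.exp (-lam * t) * Real.exp (lam ^ 2 * σ2 / 8) := by
          exact mul_le_mul_of_nonneg_left hmgf (Real.exp_pos _).le
      _ = Real.exp (-lam * t + lam ^ 2 * σ2 / 8) := (Real.exp_add _ _).symm
      _ = Real.exp (-2 * t ^ 2 / σ2) := by
          congr 1
          rw [hlam]
          field_simp
          ring
  have hset : {ω | t ≤ ∑ i, c i * η i ω} = {ω | t ≤ (∑ i, X i) ω} := by
    ext ω
    simp [hX]
  rw [hset, ← ENNReal.ofReal_toReal (measure_ne_top P _)]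
  exact ENNReal.ofReal_le_ofReal hfinal

lemma sigma_sum {d : ℕ} {𝒜 : Finset (Fin d → ℝ)} {T : (Fin d → ℝ) → ℕ}
    (f : (Fin d → ℝ) → ℝ) :
    ∑ i : (Σ a : {x // x ∈ 𝒜}, Fin (T a.1)), f (i.1 : Fin d → ℝ) =
      ∑ b ∈ 𝒜, (T b : ℝ) * f b := by
  classical
  rw [← Finset.univ_sigma_univ, Finset.sum_sigma]
  rw [← Finset.sum_coe_sort 𝒜 (fun b => (T b : ℝ) * f b)]
  exact Finset.sum_congr rfl fun a _ => by
    simp [Finset.sum_const, nsmul_eq_mul]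


/-- per-call content of Lemma 1 of the paper. Given a G-optimal
design `π` on a finite set `𝒜` of vectors (so `aᵀ Q(π)⁻¹ a ≤ d` on `𝒜`), each
item `a` observed `T(a) = ⌈(d·π(a)/(2Δ²))·log(|𝒜|/δ)⌉` times with independent
1/2-subgaussian noise, the least-squares estimator `θ̂` of `χ·θ⋆` satisfies
`|⟨θ̂, a⟩ − χ·⟨θ⋆, a⟩| ≤ Δ` for all `a ∈ 𝒜` with probability at least `1 − 2δ`. -/
theorem recurrank_per_call_concentration
    {Ω : Type*} [MeasurableSpace Ω] (P : Measure Ω) [IsProbabilityMeasure P]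
    (d : ℕ) (hd : 0 < d) (𝒜 : Finset (Fin d → ℝ)) (h𝒜 : 𝒜.Nonempty)
    (π : (Fin d → ℝ) → ℝ) (hπ0 : ∀ a ∈ 𝒜, 0 ≤ π a) (hπ1 : ∑ a ∈ 𝒜, π a = 1)
    (hQinv : IsUnit (∑ a ∈ 𝒜, π a • vecMulVec a a))
    (hGopt : ∀ a ∈ 𝒜, a ⬝ᵥ ((∑ b ∈ 𝒜, π b • vecMulVec b b)⁻¹ *ᵥ a) ≤ d)
    (Δ δ χ : ℝ) (hΔ : 0 < Δ) (hδ0 : 0 < δ) (hδ1 : δ < 1)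
    (θst : Fin d → ℝ)
    (T : (Fin d → ℝ) → ℕ)
    (hT : ∀ a, T a =
      if 0 < π a then ⌈(d * π a / (2 * Δ ^ 2)) * Real.log (𝒜.card / δ)⌉₊ else 0)
    (η : (Σ a : {x // x ∈ 𝒜}, Fin (T a.1)) → Ω → ℝ)
    (hmeas : ∀ i, Measurable (η i))
    (hindep : iIndepFun η P)
    (hint : ∀ i (l : ℝ), Integrable (fun ω => Real.exp (l * η i ω)) P)
    (hsub : ∀ i (l : ℝ), ∫ ω, Real.exp (l * η i ω) ∂P ≤ Real.exp (l ^ 2 / 8))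
    (ζ : (Σ a : {x // x ∈ 𝒜}, Fin (T a.1)) → Ω → ℝ)
    (hζ : ∀ i ω, ζ i ω = χ * (θst ⬝ᵥ (i.1 : Fin d → ℝ)) + η i ω)
    (V : Matrix (Fin d) (Fin d) ℝ) (hV : V = ∑ a ∈ 𝒜, (T a : ℝ) • vecMulVec a a)
    (hVinv : IsUnit V)
    (θhat : Ω → (Fin d → ℝ))
    (hθhat : ∀ ω, θhat ω =
      V⁻¹ *ᵥ (∑ i : (Σ a : {x // x ∈ 𝒜}, Fin (T a.1)), ζ i ω • (i.1 : Fin d → ℝ))) :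
    ENNReal.ofReal (1 - 2 * δ) ≤
      P {ω | ∀ a ∈ 𝒜, |θhat ω ⬝ᵥ a - χ * (θst ⬝ᵥ a)| ≤ Δ} := by
  classical
  have hK0 : 0 < (𝒜.card : ℝ) := by exact_mod_cast Finset.card_pos.mpr h𝒜
  have hK1 : (1:ℝ) ≤ 𝒜.card := by exact_mod_cast Finset.card_pos.mpr h𝒜
  set K : ℝ := (𝒜.card : ℝ) with hK
  set L : ℝ := Real.log (𝒜.card / δ) with hLdef
  have hL0 : 0 < L := Real.log_pos (by rw [lt_div_iff₀ hδ0]; linarith)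
  have hd0 : (0:ℝ) < d := by exact_mod_cast hd
  set cst : ℝ := d * L / (2 * Δ ^ 2) with hcst
  have hcst0 : 0 < cst := div_pos (mul_pos hd0 hL0) (by positivity)
  set Q := ∑ b ∈ 𝒜, π b • vecMulVec b b with hQ
  have hVdet : IsUnit V.det := (Matrix.isUnit_iff_isUnit_det V).mp hVinv
  have hQdet : IsUnit Q.det := (Matrix.isUnit_iff_isUnit_det Q).mp hQinv
  have hvmvT : ∀ b : Fin d → ℝ, (vecMulVec b b)ᵀ = vecMulVec b b := by
    intro b; ext i j; simp [Matrix.transpose_apply, Matrix.vecMulVec_apply, mul_comm]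
  have hVT : Vᵀ = V := by
    rw [hV, Matrix.transpose_sum]
    exact Finset.sum_congr rfl fun b _ => by rw [Matrix.transpose_smul, hvmvT]
  have hVinvT : (V⁻¹)ᵀ = V⁻¹ := by rw [Matrix.transpose_nonsing_inv, hVT]
  have hVw : ∀ a : Fin d → ℝ, V *ᵥ (V⁻¹ *ᵥ a) = a := fun a => by
    rw [Matrix.mulVec_mulVec, Matrix.mul_nonsing_inv _ hVdet, Matrix.one_mulVec]
  -- coefficient bound
  have hcoef : ∀ b ∈ 𝒜, cst * π b ≤ (T b : ℝ) := by
    intro b hb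
    rw [hT b]
    rcases (hπ0 b hb).lt_or_eq with h | h
    · rw [if_pos h]
      refine le_trans (le_of_eq ?_) (Nat.le_ceil ((d * π b / (2 * Δ ^ 2)) * L))
      rw [hcst]; ring
    · rw [if_neg (by rw [← h]; exact lt_irrefl 0), ← h]
      simp
  -- quadratic forms
  have hQuadV : ∀ x u : Fin d → ℝ,
      x ⬝ᵥ (V *ᵥ u) = ∑ b ∈ 𝒜, (T b : ℝ) * (x ⬝ᵥ b) * (b ⬝ᵥ u) := by
    intro x u; rw [hV]; exact bilin_sum 𝒜 (fun b => (T b : ℝ)) x u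
  set A := cst • Q with hA
  have hAsum : A = ∑ b ∈ 𝒜, (cst * π b) • vecMulVec b b := by
    rw [hA, hQ, Finset.smul_sum]
    exact Finset.sum_congr rfl fun b _ => by rw [smul_smul]
  have hAquad : ∀ x u : Fin d → ℝ,
      x ⬝ᵥ (A *ᵥ u) = ∑ b ∈ 𝒜, (cst * π b) * (x ⬝ᵥ b) * (b ⬝ᵥ u) := by
    intro x u; rw [hAsum]; exact bilin_sum 𝒜 (fun b => cst * π b) x u
  have hApsd : A.PosSemidef := by
    refine Matrix.PosSemidef.of_dotProduct_mulVec_nonneg ?_ ?_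
    · show Aᴴ = A
      rw [Matrix.conjTranspose_eq_transpose_of_trivial]
      nth_rewrite 1 [hAsum]
      rw [Matrix.transpose_sum, hAsum]
      exact Finset.sum_congr rfl fun b _ => by rw [Matrix.transpose_smul, hvmvT]
    · intro x
      have : star x = x := by simp
      rw [this, hAquad]
      refine Finset.sum_nonneg fun b hb => ?_
      have h1 : (x ⬝ᵥ b) * (b ⬝ᵥ x) = (b ⬝ᵥ x) ^ 2 := by rw [dotProduct_comm]; ring
      rw [mul_assoc, h1]
      exact mul_nonneg (mul_nonneg hcst0.le (hπ0 b hb)) (sq_nonneg _)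
  have hAle : ∀ u, u ⬝ᵥ (A *ᵥ u) ≤ u ⬝ᵥ (V *ᵥ u) := by
    intro u
    rw [hAquad, hQuadV]
    refine Finset.sum_le_sum fun b hb => ?_
    have h2 : cst * π b * (u ⬝ᵥ b) * (b ⬝ᵥ u) = (cst * π b) * (b ⬝ᵥ u) ^ 2 := by
      rw [dotProduct_comm u b]; ring
    have h3 : (T b : ℝ) * (u ⬝ᵥ b) * (b ⬝ᵥ u) = (T b : ℝ) * (b ⬝ᵥ u) ^ 2 := by
      rw [dotProduct_comm u b]; ring
    rw [h2, h3]
    exact mul_le_mul_of_nonneg_right (hcoef b hb) (sq_nonneg _)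
  have hAinv : IsUnit A := by
    rw [Matrix.isUnit_iff_isUnit_det, hA, Matrix.det_smul, isUnit_iff_ne_zero]
    exact mul_ne_zero (pow_ne_zero _ (ne_of_gt hcst0)) (isUnit_iff_ne_zero.mp hQdet)
  have hAinvEq : A⁻¹ = cst⁻¹ • Q⁻¹ := by
    apply Matrix.inv_eq_right_inv
    rw [hA, Matrix.smul_mul, Matrix.mul_smul, smul_smul,
      Matrix.mul_nonsing_inv _ hQdet, mul_inv_cancel₀ (ne_of_gt hcst0), one_smul]
  -- σ² bound
  have hσbound : ∀ a ∈ 𝒜, a ⬝ᵥ (V⁻¹ *ᵥ a) ≤ 2 * Δ ^ 2 / L := by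
    intro a ha
    have h1 := inv_quad_comp A V hApsd hAinv hVinv hAle a
    have h2 : a ⬝ᵥ (A⁻¹ *ᵥ a) = cst⁻¹ * (a ⬝ᵥ (Q⁻¹ *ᵥ a)) := by
      rw [hAinvEq, Matrix.smul_mulVec, dotProduct_smul, smul_eq_mul]
    have h3 : a ⬝ᵥ (Q⁻¹ *ᵥ a) ≤ (d : ℝ) := hGopt a ha
    calc a ⬝ᵥ (V⁻¹ *ᵥ a) ≤ cst⁻¹ * (a ⬝ᵥ (Q⁻¹ *ᵥ a)) := h1.trans_eq h2
      _ ≤ cst⁻¹ * d := mul_le_mul_of_nonneg_left h3 (inv_nonneg.mpr hcst0.le)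
      _ = 2 * Δ ^ 2 / L := by
          rw [hcst]
          field_simp
  -- deviation identity
  have hdev : ∀ (ω : Ω) (a : Fin d → ℝ),
      θhat ω ⬝ᵥ a - χ * (θst ⬝ᵥ a) =
        ∑ i : (Σ a : {x // x ∈ 𝒜}, Fin (T a.1)),
          ((i.1 : Fin d → ℝ) ⬝ᵥ (V⁻¹ *ᵥ a)) * η i ω := by
    intro ω a
    set w := V⁻¹ *ᵥ a with hw
    have h1 : θhat ω ⬝ᵥ a = ∑ i : (Σ a : {x // x ∈ 𝒜}, Fin (T a.1)),
        ζ i ω * ((i.1 : Fin d → ℝ) ⬝ᵥ w) := by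
      rw [hθhat ω, dotProduct_comm, Matrix.dotProduct_mulVec]
      have hvm : a ᵥ* V⁻¹ = w := by
        rw [← hVinvT, Matrix.vecMul_transpose, hw]
      rw [hvm, dp_sum]
      refine Finset.sum_congr rfl fun i _ => ?_
      rw [dotProduct_smul, smul_eq_mul, dotProduct_comm]
    have hbil : ∑ i : (Σ a : {x // x ∈ 𝒜}, Fin (T a.1)),
        (θst ⬝ᵥ (i.1 : Fin d → ℝ)) * ((i.1 : Fin d → ℝ) ⬝ᵥ w) = θst ⬝ᵥ a := by
      rw [sigma_sum (fun b => (θst ⬝ᵥ b) * (b ⬝ᵥ w))]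
      have hb := bilin_sum 𝒜 (fun b => (T b : ℝ)) θst w
      rw [← hV] at hb
      rw [show ∑ b ∈ 𝒜, (T b : ℝ) * ((θst ⬝ᵥ b) * (b ⬝ᵥ w)) =
          ∑ b ∈ 𝒜, (T b : ℝ) * (θst ⬝ᵥ b) * (b ⬝ᵥ w) from
        Finset.sum_congr rfl fun b _ => by ring, ← hb, hw, hVw]
    have h2 : ∀ i : (Σ a : {x // x ∈ 𝒜}, Fin (T a.1)),
        ζ i ω * ((i.1 : Fin d → ℝ) ⬝ᵥ w) =
          χ * ((θst ⬝ᵥ (i.1 : Fin d → ℝ)) * ((i.1 : Fin d → ℝ) ⬝ᵥ w)) +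
            ((i.1 : Fin d → ℝ) ⬝ᵥ w) * η i ω := by
      intro i; rw [hζ]; ring
    rw [h1, Finset.sum_congr rfl fun i _ => h2 i, Finset.sum_add_distrib, ← Finset.mul_sum,
      hbil]
    ring
  -- σ² identity
  have hσid : ∀ a : Fin d → ℝ,
      ∑ i : (Σ a : {x // x ∈ 𝒜}, Fin (T a.1)), ((i.1 : Fin d → ℝ) ⬝ᵥ (V⁻¹ *ᵥ a)) ^ 2 =
        a ⬝ᵥ (V⁻¹ *ᵥ a) := by
    intro a
    set w := V⁻¹ *ᵥ a with hw
    rw [sigma_sum (fun b => (b ⬝ᵥ w) ^ 2)]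
    have hb := bilin_sum 𝒜 (fun b => (T b : ℝ)) w w
    rw [← hV] at hb
    calc ∑ b ∈ 𝒜, (T b : ℝ) * (b ⬝ᵥ w) ^ 2
        = ∑ b ∈ 𝒜, (T b : ℝ) * (w ⬝ᵥ b) * (b ⬝ᵥ w) := by
          refine Finset.sum_congr rfl fun b _ => ?_
          rw [dotProduct_comm w b]; ring
      _ = w ⬝ᵥ (V *ᵥ w) := hb.symm
      _ = w ⬝ᵥ a := by rw [hw, hVw]
      _ = a ⬝ᵥ w := dotProduct_comm _ _
  -- per-item bad-event bound
  have hbad : ∀ a ∈ 𝒜, P {ω | Δ < |θhat ω ⬝ᵥ a - χ * (θst ⬝ᵥ a)|} ≤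
      ENNReal.ofReal (δ / K) + ENNReal.ofReal (δ / K) := by
    intro a ha
    set w := V⁻¹ *ᵥ a with hw
    set c : (Σ a : {x // x ∈ 𝒜}, Fin (T a.1)) → ℝ :=
      fun i => (i.1 : Fin d → ℝ) ⬝ᵥ w with hc
    have hsetrw : {ω | Δ < |θhat ω ⬝ᵥ a - χ * (θst ⬝ᵥ a)|} =
        {ω | Δ < |∑ i, c i * η i ω|} := by
      ext ω
      rw [Set.mem_setOf_eq, Set.mem_setOf_eq, hdev ω a]
    rw [hsetrw]
    have hσ2nn : 0 ≤ ∑ i, c i ^ 2 := Finset.sum_nonneg fun i _ => sq_nonneg _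
    rcases hσ2nn.lt_or_eq with hσpos | hσ0
    · have hsub2 : {ω | Δ < |∑ i, c i * η i ω|} ⊆
          {ω | Δ ≤ ∑ i, c i * η i ω} ∪ {ω | Δ ≤ ∑ i, (-c i) * η i ω} := by
        intro ω hω
        rw [Set.mem_setOf_eq, lt_abs] at hω
        rcases hω with h | h
        · exact Or.inl (le_of_lt h)
        · refine Or.inr ?_
          rw [Set.mem_setOf_eq]
          have : ∑ i, (-c i) * η i ω = -∑ i, c i * η i ω := by
            rw [← Finset.sum_neg_distrib]
            exact Finset.sum_congr rfl fun i _ => by ring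
          rw [this]
          exact le_of_lt h
      have hexp : Real.exp (-2 * Δ ^ 2 / ∑ i, c i ^ 2) ≤ δ / K := by
        have hs1 : ∑ i, c i ^ 2 ≤ 2 * Δ ^ 2 / L := by
          rw [hc]
          calc ∑ i : (Σ a : {x // x ∈ 𝒜}, Fin (T a.1)),
                ((i.1 : Fin d → ℝ) ⬝ᵥ w) ^ 2 = a ⬝ᵥ (V⁻¹ *ᵥ a) := hσid a
            _ ≤ 2 * Δ ^ 2 / L := hσbound a ha
        have h2 : -2 * Δ ^ 2 / (∑ i, c i ^ 2) ≤ -L := by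
          have hrw : -2 * Δ ^ 2 / (∑ i, c i ^ 2) = -(2 * Δ ^ 2 / ∑ i, c i ^ 2) := by ring
          rw [hrw, neg_le_neg_iff, le_div_iff₀ hσpos]
          calc L * ∑ i, c i ^ 2 ≤ L * (2 * Δ ^ 2 / L) :=
                mul_le_mul_of_nonneg_left hs1 hL0.le
            _ = 2 * Δ ^ 2 := by field_simp
        calc Real.exp (-2 * Δ ^ 2 / ∑ i, c i ^ 2) ≤ Real.exp (-L) :=
              Real.exp_le_exp.mpr h2
          _ = δ / K := by
              rw [hLdef, Real.exp_neg, Real.exp_log (by positivity), inv_div, hK]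
      have b1 := chernoff_one P η hmeas hindep hint hsub c hΔ.le hσpos
      have hσpos' : 0 < ∑ i, (-c i) ^ 2 := by simpa [neg_sq] using hσpos
      have b2 := chernoff_one P η hmeas hindep hint hsub (fun i => -c i) hΔ.le hσpos'
      have hb1 : P {ω | Δ ≤ ∑ i, c i * η i ω} ≤ ENNReal.ofReal (δ / K) :=
        b1.trans (ENNReal.ofReal_le_ofReal hexp)
      have hb2 : P {ω | Δ ≤ ∑ i, (-c i) * η i ω} ≤ ENNReal.ofReal (δ / K) := by
        refine b2.trans (ENNReal.ofReal_le_ofReal ?_)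
        calc Real.exp (-2 * Δ ^ 2 / ∑ i, (-c i) ^ 2)
            = Real.exp (-2 * Δ ^ 2 / ∑ i, c i ^ 2) := by simp [neg_sq]
          _ ≤ δ / K := hexp
      exact (measure_mono hsub2).trans ((measure_union_le _ _).trans (add_le_add hb1 hb2))
    · have hc0 : ∀ i, c i = 0 := by
        intro i
        have h0 := (Finset.sum_eq_zero_iff_of_nonneg
          (fun j (_ : j ∈ Finset.univ) => sq_nonneg (c j))).mp hσ0.symm i (Finset.mem_univ i)
        exact pow_eq_zero_iff (two_ne_zero) |>.mp h0
      have hempty : {ω | Δ < |∑ i, c i * η i ω|} = ∅ := by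
        ext ω
        simp only [Set.mem_setOf_eq, Set.mem_empty_iff_false, iff_false, not_lt]
        have : ∑ i, c i * η i ω = 0 := Finset.sum_eq_zero fun i _ => by rw [hc0 i, zero_mul]
        rw [this, abs_zero]
        exact hΔ.le
      rw [hempty]
      simp
  -- union bound and conclusion
  set G := {ω | ∀ a ∈ 𝒜, |θhat ω ⬝ᵥ a - χ * (θst ⬝ᵥ a)| ≤ Δ} with hG
  have hcompl : Gᶜ ⊆ ⋃ a ∈ 𝒜, {ω | Δ < |θhat ω ⬝ᵥ a - χ * (θst ⬝ᵥ a)|} := by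
    intro ω hω
    simp only [hG, Set.mem_compl_iff, Set.mem_setOf_eq, not_forall] at hω
    obtain ⟨a, ha, hlt⟩ := hω
    exact Set.mem_biUnion ha (Set.mem_setOf_eq ▸ not_le.mp hlt)
  have hPcompl : P Gᶜ ≤ ENNReal.ofReal (2 * δ) := by
    refine (measure_mono hcompl).trans ((measure_biUnion_finset_le 𝒜 _).trans ?_)
    calc ∑ a ∈ 𝒜, P {ω | Δ < |θhat ω ⬝ᵥ a - χ * (θst ⬝ᵥ a)|}
        ≤ ∑ a ∈ 𝒜, (ENNReal.ofReal (δ / K) + ENNReal.ofReal (δ / K)) :=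
          Finset.sum_le_sum fun a ha => hbad a ha
      _ = ∑ a ∈ 𝒜, ENNReal.ofReal (2 * (δ / K)) := by
          refine Finset.sum_congr rfl fun a _ => ?_
          rw [← ENNReal.ofReal_add (by positivity) (by positivity)]
          congr 1; ring
      _ = ENNReal.ofReal (∑ a ∈ 𝒜, 2 * (δ / K)) :=
          (ENNReal.ofReal_sum_of_nonneg fun a _ => by positivity).symm
      _ = ENNReal.ofReal (2 * δ) := by
          rw [Finset.sum_const, nsmul_eq_mul]
          congr 1
          rw [hK]
          field_simp
  have h1le : (1 : ENNReal) ≤ P G + P Gᶜ := by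
    calc (1 : ENNReal) = P Set.univ := (measure_univ (μ := P)).symm
      _ = P (G ∪ Gᶜ) := by rw [Set.union_compl_self]
      _ ≤ P G + P Gᶜ := measure_union_le _ _
  calc ENNReal.ofReal (1 - 2 * δ) = 1 - ENNReal.ofReal (2 * δ) := by
        rw [ENNReal.ofReal_sub _ (by positivity), ENNReal.ofReal_one]
    _ ≤ 1 - P Gᶜ := tsub_le_tsub_left hPcompl 1
    _ ≤ P G := by
        rw [tsub_le_iff_right]
        exact h1le
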